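/- Let {E_n} be i.i.d. Exp(1) random variables. The random variable C = (2/π²) Σ_{n=1}^∞ E_n/(n − 1/2)² has Laplace transform E[e^{−sC}] = 1/cosh(√(2s)) for all s ≥ 0. -/

import Mathlib

open MeasureTheory ProbabilityTheory Filter Topology

lemma my_prod_range_two_mul (f : ℕ → ℝ) (n : ℕ) :
    ∏ m ∈ Finset.range (2 * n), f m
      = (∏ k ∈ Finset.range n, f (2 * k)) * ∏ k ∈ Finset.range n, f (2 * k + 1) := by
  induction n with
  | zero => simp
  | succ n ih =>
    rw [show 2 * (n + 1) = (2 * n) + 1 + 1 by ring, Finset.prod_range_succ,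
      Finset.prod_range_succ, ih, Finset.prod_range_succ, Finset.prod_range_succ]
    ring

lemma my_euler_sinh (t : ℝ) :
    Tendsto (fun n : ℕ => Real.pi * t * ∏ j ∈ Finset.range n, (1 + t ^ 2 / ((j : ℝ) + 1) ^ 2))
      atTop (𝓝 (Real.sinh (Real.pi * t))) := by
  have h := Complex.tendsto_euler_sin_prod ((t : ℂ) * Complex.I)
  have key : ∀ n : ℕ, (Real.pi : ℂ) * ((t : ℂ) * Complex.I) *
      ∏ j ∈ Finset.range n, (1 - ((t : ℂ) * Complex.I) ^ 2 / ((j : ℂ) + 1) ^ 2)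
      = ((Real.pi * t * ∏ j ∈ Finset.range n, (1 + t ^ 2 / ((j : ℝ) + 1) ^ 2) : ℝ) : ℂ)
        * Complex.I := by
    intro n
    have h1 : ∀ j : ℕ, (1 : ℂ) - ((t : ℂ) * Complex.I) ^ 2 / ((j : ℂ) + 1) ^ 2
        = ((1 + t ^ 2 / ((j : ℝ) + 1) ^ 2 : ℝ) : ℂ) := by
      intro j
      push_cast
      rw [mul_pow, Complex.I_sq]
      ring
    rw [Finset.prod_congr rfl (fun j _ => h1 j)]
    push_cast
    ring
  rw [funext key] at h
  have hsin : Complex.sin ((Real.pi : ℂ) * ((t : ℂ) * Complex.I))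
      = ((Real.sinh (Real.pi * t) : ℝ) : ℂ) * Complex.I := by
    rw [show (Real.pi : ℂ) * ((t : ℂ) * Complex.I) = ((Real.pi * t : ℝ) : ℂ) * Complex.I by
      push_cast; ring, Complex.sin_mul_I, Complex.ofReal_sinh]
  rw [hsin] at h
  have h2 := h.mul_const (-Complex.I)
  have hIe : ∀ z : ℂ, z * Complex.I * -Complex.I = z := by
    intro z
    rw [mul_assoc]
    simp [Complex.I_mul_I]
  simp_rw [hIe] at h2
  have h3 := (Complex.continuous_re.tendsto _).comp h2
  simpa only [Function.comp_def, Complex.ofReal_re] using h3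

lemma my_euler_cosh {t : ℝ} (ht : 0 < t) :
    Tendsto (fun n : ℕ => ∏ k ∈ Finset.range n, (1 + (2 * t) ^ 2 / (2 * (k : ℝ) + 1) ^ 2))
      atTop (𝓝 (Real.cosh (Real.pi * t))) := by
  have hπ : (0 : ℝ) < Real.pi := Real.pi_pos
  have hP : ∀ n, (0 : ℝ) < ∏ j ∈ Finset.range n, (1 + t ^ 2 / ((j : ℝ) + 1) ^ 2) :=
    fun n => Finset.prod_pos fun j _ => by positivity
  have hsinh : (0 : ℝ) < Real.sinh (Real.pi * t) := Real.sinh_pos_iff.mpr (by positivity)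
  have hnum : Tendsto (fun n : ℕ => Real.pi * (2 * t) *
      ∏ j ∈ Finset.range (2 * n), (1 + (2 * t) ^ 2 / ((j : ℝ) + 1) ^ 2))
      atTop (𝓝 (Real.sinh (Real.pi * (2 * t)))) := by
    exact (my_euler_sinh (2 * t)).comp
      (tendsto_atTop_mono (fun n => by simp only [id_eq]; omega) tendsto_id)
  have hden : Tendsto (fun n : ℕ => 2 * (Real.pi * t *
      ∏ j ∈ Finset.range n, (1 + t ^ 2 / ((j : ℝ) + 1) ^ 2)))
      atTop (𝓝 (2 * Real.sinh (Real.pi * t))) := (my_euler_sinh t).const_mul 2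
  have hden_ne : (2 : ℝ) * Real.sinh (Real.pi * t) ≠ 0 := by positivity
  have hdiv := hnum.div hden hden_ne
  have heq : ∀ n : ℕ, (Real.pi * (2 * t) *
        ∏ j ∈ Finset.range (2 * n), (1 + (2 * t) ^ 2 / ((j : ℝ) + 1) ^ 2)) /
      (2 * (Real.pi * t * ∏ j ∈ Finset.range n, (1 + t ^ 2 / ((j : ℝ) + 1) ^ 2)))
      = ∏ k ∈ Finset.range n, (1 + (2 * t) ^ 2 / (2 * (k : ℝ) + 1) ^ 2) := by
    intro n
    rw [my_prod_range_two_mul]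
    have hodd : ∀ k : ℕ, (1 + (2 * t) ^ 2 / (((2 * k + 1 : ℕ) : ℝ) + 1) ^ 2)
        = 1 + t ^ 2 / ((k : ℝ) + 1) ^ 2 := by
      intro k
      push_cast
      have hk : ((k : ℝ) + 1) ≠ 0 := by positivity
      field_simp
      ring
    have heven : ∀ k : ℕ, (1 + (2 * t) ^ 2 / (((2 * k : ℕ) : ℝ) + 1) ^ 2)
        = 1 + (2 * t) ^ 2 / (2 * (k : ℝ) + 1) ^ 2 := by
      intro k; push_cast; ring_nf
    rw [Finset.prod_congr rfl (fun k _ => hodd k), Finset.prod_congr rfl (fun k _ => heven k)]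
    have hne : 2 * (Real.pi * t * ∏ j ∈ Finset.range n, (1 + t ^ 2 / ((j : ℝ) + 1) ^ 2)) ≠ 0 := by
      have := (hP n).ne'
      positivity
    rw [div_eq_iff hne]
    ring
  have hfin := hdiv.congr heq
  have hlim : Real.sinh (Real.pi * (2 * t)) / (2 * Real.sinh (Real.pi * t))
      = Real.cosh (Real.pi * t) := by
    rw [show Real.pi * (2 * t) = 2 * (Real.pi * t) by ring, Real.sinh_two_mul]
    field_simp
  rwa [hlim] at hfin

lemma my_expMeasure_eq : expMeasure 1
    = volume.withDensity (fun x => ENNReal.ofReal (if 0 ≤ x then Real.exp (-x) else 0)) := by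
  show volume.withDensity (gammaPDF 1 1) = _
  congr 1
  funext x
  rw [gammaPDF, gammaPDFReal]
  split_ifs <;> simp [Real.Gamma_one, Real.rpow_zero, Real.rpow_one]

lemma my_exp_laplace {c : ℝ} (hc : 0 ≤ c) :
    ∫ x, Real.exp (-(c * x)) ∂(expMeasure 1) = (1 + c)⁻¹ := by
  have hb : (0 : ℝ) < 1 + c := by linarith
  have hmeas0 : Measurable fun x : ℝ => if 0 ≤ x then Real.exp (-x) else 0 :=
    Measurable.ite (measurableSet_le measurable_const measurable_id)
      (Real.measurable_exp.comp measurable_neg) measurable_const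
  rw [my_expMeasure_eq]
  rw [show (fun x : ℝ => ENNReal.ofReal (if 0 ≤ x then Real.exp (-x) else 0))
      = (fun x : ℝ => ((Real.toNNReal (if 0 ≤ x then Real.exp (-x) else 0) : NNReal) : ENNReal))
      from rfl]
  rw [integral_withDensity_eq_integral_smul hmeas0.real_toNNReal]
  have hfun : (fun x : ℝ => Real.toNNReal (if 0 ≤ x then Real.exp (-x) else 0) • Real.exp (-(c * x)))
      = Set.indicator (Set.Ici (0:ℝ)) (fun x => Real.exp (-(1 + c) * x)) := by
    funext x
    rw [NNReal.smul_def, Real.coe_toNNReal']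
    rw [Set.indicator_apply]
    by_cases h : (0:ℝ) ≤ x
    · simp only [h, if_true, Set.mem_Ici, max_eq_left (Real.exp_pos _).le, smul_eq_mul,
        ← Real.exp_add]
      congr 1
      ring
    · simp [h, Set.mem_Ici]
  rw [hfun, integral_indicator measurableSet_Ici, integral_Ici_eq_integral_Ioi]
  have := integral_exp_neg_mul_rpow (p := 1) zero_lt_one hb
  simp only [Real.rpow_one] at this
  rw [this]
  norm_num [Real.rpow_neg_one, Real.Gamma_two]

lemma my_exp_mean : ∫⁻ x, (‖x‖₊ : ENNReal) ∂(expMeasure 1) = 1 := by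
  have hmeas0 : Measurable fun x : ℝ => if 0 ≤ x then Real.exp (-x) else 0 :=
    Measurable.ite (measurableSet_le measurable_const measurable_id)
      (Real.measurable_exp.comp measurable_neg) measurable_const
  rw [my_expMeasure_eq]
  rw [lintegral_withDensity_eq_lintegral_mul _ (by exact hmeas0.ennreal_ofReal)
    (measurable_nnnorm.coe_nnreal_ennreal)]
  have hfun : ∀ x : ℝ, (ENNReal.ofReal (if 0 ≤ x then Real.exp (-x) else 0) * ‖x‖₊ : ENNReal)
      = ENNReal.ofReal (Set.indicator (Set.Ici (0:ℝ)) (fun x => Real.exp (-x) * x) x) := by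
    intro x
    rw [← enorm_eq_nnnorm, Real.enorm_eq_ofReal_abs, ← ENNReal.ofReal_mul (by positivity), Set.indicator_apply]
    by_cases h : (0:ℝ) ≤ x
    · simp [h, abs_of_nonneg h]
    · simp [h]
  simp only [Pi.mul_apply, hfun]
  have hint : Integrable (Set.indicator (Set.Ici (0:ℝ)) (fun x => Real.exp (-x) * x)) volume := by
    rw [integrable_indicator_iff measurableSet_Ici]
    have h2 : IntegrableOn (fun x => Real.exp (-x) * x) (Set.Ioi 0) volume := by
      have := Real.GammaIntegral_convergent (s := 2) two_pos
      simpa [show (2:ℝ) - 1 = 1 by norm_num, Real.rpow_one] using this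
    exact Iff.mpr integrableOn_Ici_iff_integrableOn_Ioi h2
  rw [← ofReal_integral_eq_lintegral_ofReal hint]
  · rw [integral_indicator measurableSet_Ici, integral_Ici_eq_integral_Ioi]
    have := Real.Gamma_eq_integral (s := 2) two_pos
    simp only [show (2:ℝ) - 1 = 1 by norm_num, Real.rpow_one, Real.Gamma_two] at this
    rw [← this]
    norm_num
  · filter_upwards with x
    rw [Set.indicator_apply]
    split_ifs with h
    · have : (0:ℝ) ≤ x := h
      positivity
    · exact le_rfl

set_option maxHeartbeats 2000000 in
/-- for i.i.d. `Exp(1)` random variables `E_n`, the random variable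
`C = (2/π²) Σ_{n≥1} E_n/(n − 1/2)²` has Laplace transform
`E[e^{−sC}] = 1/cosh(√(2s))` for all `s ≥ 0`. -/
theorem stmt_18 {Ω : Type*} [MeasureSpace Ω] {P : Measure Ω} [IsProbabilityMeasure P]
    (E : ℕ → Ω → ℝ) (hmeas : ∀ n, Measurable (E n))
    (hindep : iIndepFun E P)
    (hlaw : ∀ n, Measure.map (E n) P = expMeasure 1)
    (s : ℝ) (hs : 0 ≤ s) :
    ∫ ω, Real.exp (-s * ((2 / Real.pi ^ 2) *
        ∑' n : ℕ, E (n + 1) ω / ((n + 1 : ℝ) - 1/2) ^ 2)) ∂P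
      = 1 / Real.cosh (Real.sqrt (2 * s)) := by
  have hπ : (0:ℝ) < Real.pi := Real.pi_pos
  rcases eq_or_lt_of_le hs with hs0 | hs_pos
  · simp only [← hs0, neg_zero, zero_mul, Real.exp_zero, mul_zero, Real.sqrt_zero,
      Real.cosh_zero]
    simp
  have hcex : ∃ c : ℕ → ℝ, ∀ i : ℕ, c i = s * (2 / Real.pi ^ 2) / ((i : ℝ) - 1/2) ^ 2 :=
    ⟨fun i => s * (2 / Real.pi ^ 2) / ((i : ℝ) - 1/2) ^ 2, fun i => rfl⟩
  obtain ⟨c, hc⟩ := hcex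
  have hc_nonneg : ∀ i, 0 ≤ c i := fun i => by
    simp only [hc]
    positivity
  -- Step 1: finite Laplace transform
  have hmgf : ∀ N : ℕ, ∫ ω, Real.exp (-(∑ k ∈ Finset.range N, c (k+1) * E (k+1) ω)) ∂P
      = ∏ k ∈ Finset.range N, (1 + c (k+1))⁻¹ := by
    intro N
    have hX : iIndepFun (fun i => (fun x => c i * x) ∘ E i) P :=
      hindep.comp _ (fun i => measurable_id.const_mul (c i))
    have hXmeas : ∀ i, Measurable ((fun x => c i * x) ∘ E i) :=
      fun i => (measurable_id.const_mul (c i)).comp (hmeas i)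
    have hmgfsum := hX.mgf_sum (t := -1) hXmeas (Finset.image Nat.succ (Finset.range N))
    have hinj : ∀ x ∈ Finset.range N, ∀ y ∈ Finset.range N, Nat.succ x = Nat.succ y → x = y :=
      fun x _ y _ h => Nat.succ_injective h
    have hsingle : ∀ i, mgf ((fun x => c i * x) ∘ E i) P (-1) = (1 + c i)⁻¹ := by
      intro i
      have hcont : Continuous fun x : ℝ => Real.exp (-(c i * x)) :=
        Real.continuous_exp.comp ((continuous_const.mul continuous_id).neg)
      have h2 : ∫ x, Real.exp (-(c i * x)) ∂(P.map (E i))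
          = mgf ((fun x => c i * x) ∘ E i) P (-1) := by
        rw [integral_map (hmeas i).aemeasurable hcont.aestronglyMeasurable]
        unfold mgf
        refine integral_congr_ae (Filter.Eventually.of_forall fun ω => ?_)
        simp [Function.comp, neg_one_mul]
      rw [← h2, hlaw i]
      exact my_exp_laplace (hc_nonneg i)
    calc ∫ ω, Real.exp (-(∑ k ∈ Finset.range N, c (k+1) * E (k+1) ω)) ∂P
        = mgf (∑ i ∈ Finset.image Nat.succ (Finset.range N), (fun x => c i * x) ∘ E i) P (-1) := by
          unfold mgf
          congr 1
          funext ω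
          congr 1
          rw [Finset.sum_apply, Finset.sum_image hinj, neg_one_mul]
          simp [Function.comp]
      _ = ∏ i ∈ Finset.image Nat.succ (Finset.range N),
            mgf ((fun x => c i * x) ∘ E i) P (-1) := hmgfsum
      _ = ∏ k ∈ Finset.range N, mgf ((fun x => c (k+1) * x) ∘ E (k+1)) P (-1) :=
          Finset.prod_image hinj
      _ = ∏ k ∈ Finset.range N, (1 + c (k+1))⁻¹ :=
          Finset.prod_congr rfl fun k _ => hsingle (k+1)
  -- Step 2: a.e. nonnegativity
  have hEnn : ∀ᵐ ω ∂P, ∀ n, 0 ≤ E n ω := by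
    rw [ae_all_iff]
    intro n
    have hmap : P (E n ⁻¹' Set.Iio 0) = 0 := by
      rw [← Measure.map_apply (hmeas n) measurableSet_Iio, hlaw n]
      show Measure.withDensity volume (gammaPDF 1 1) (Set.Iio 0) = 0
      rw [withDensity_apply _ measurableSet_Iio]
      exact lintegral_gammaPDF_of_nonpos le_rfl
    rw [ae_iff]
    convert hmap using 2
    ext ω
    simp [not_le]
  -- Step 3: a.e. summability
  have hsum_a : Summable (fun k : ℕ => c (k + 1)) := by
    have h0 : Summable (fun n : ℕ => 1 / (n:ℝ) ^ 2) :=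
      (Real.summable_one_div_nat_pow (p := 2)).mpr (by norm_num)
    have h1 : Summable (fun k : ℕ => 1 / ((k:ℝ) + 1) ^ 2) := by
      have := (summable_nat_add_iff 1).mpr h0
      simpa using this
    have h2 := (h1.mul_left 4).mul_left (s * (2 / Real.pi ^ 2))
    refine Summable.of_nonneg_of_le (fun k => hc_nonneg _) (fun k => ?_) h2
    have e1 : ((k+1:ℕ):ℝ) - 1/2 = (2*(k:ℝ)+1)/2 := by push_cast; ring
    have h3 : (((k:ℝ)+1)/2) ^ 2 ≤ ((2*(k:ℝ)+1)/2) ^ 2 := by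
      have : (0:ℝ) ≤ (k:ℝ) := Nat.cast_nonneg k
      nlinarith
    have h4 : (0:ℝ) < (((k:ℝ)+1)/2) ^ 2 := by positivity
    calc c (k+1) = s * (2 / Real.pi ^ 2) / (((k+1:ℕ):ℝ) - 1/2) ^ 2 := by simp only [hc]
      _ ≤ s * (2 / Real.pi ^ 2) / (((k:ℝ)+1)/2) ^ 2 := by
          rw [e1]
          gcongr
      _ = s * (2 / Real.pi ^ 2) * (4 * (1 / ((k:ℝ) + 1) ^ 2)) := by
          have : ((k:ℝ)+1) ≠ 0 := by positivity
          field_simp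
          norm_num
  have hae_sum : ∀ᵐ ω ∂P, Summable (fun k => c (k+1) * E (k+1) ω) := by
    set f : ℕ → Ω → ℝ := fun k ω => c (k+1) * E (k+1) ω with hf
    have hfm : ∀ k, Measurable (f k) := fun k => (hmeas _).const_mul _
    have key : ∀ k, ∫⁻ ω, (‖f k ω‖₊ : ENNReal) ∂P = ENNReal.ofReal (c (k+1)) := by
      intro k
      have h1 : ∀ ω, ((‖f k ω‖₊ : ENNReal)) = ENNReal.ofReal (c (k+1)) * (‖E (k+1) ω‖₊ : ENNReal) := by
        intro ω
        simp only [hf]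
        rw [← enorm_eq_nnnorm, Real.enorm_eq_ofReal_abs, abs_mul, ENNReal.ofReal_mul (abs_nonneg _),
          abs_of_nonneg (hc_nonneg _), ← Real.enorm_eq_ofReal_abs, enorm_eq_nnnorm]
      simp_rw [h1]
      rw [lintegral_const_mul _ (hmeas _).nnnorm.coe_nnreal_ennreal]
      rw [show ∫⁻ ω, (‖E (k+1) ω‖₊ : ENNReal) ∂P = ∫⁻ x, (‖x‖₊ : ENNReal) ∂(P.map (E (k+1))) from
        (lintegral_map measurable_nnnorm.coe_nnreal_ennreal (hmeas _)).symm, hlaw, my_exp_mean,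
        mul_one]
    have htop : ∫⁻ ω, ∑' k, (‖f k ω‖₊ : ENNReal) ∂P ≠ ⊤ := by
      rw [lintegral_tsum (fun k => ((hfm k).nnnorm.coe_nnreal_ennreal).aemeasurable)]
      simp_rw [key]
      rw [← ENNReal.ofReal_tsum_of_nonneg (fun k => hc_nonneg _) hsum_a]
      exact ENNReal.ofReal_ne_top
    have hae := ae_lt_top' (AEMeasurable.ennreal_tsum
      (fun k => ((hfm k).nnnorm.coe_nnreal_ennreal).aemeasurable)) htop
    filter_upwards [hae] with ω hω
    have h2 : Summable fun k => ((‖f k ω‖₊ : NNReal) : ℝ) :=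
      ENNReal.tsum_coe_ne_top_iff_summable_coe.mp hω.ne
    have h3 : Summable fun k => ‖f k ω‖ := by simpa [coe_nnnorm] using h2
    exact h3.of_norm
  -- Step 4: dominated convergence
  have hDCT : Tendsto (fun N => ∫ ω, Real.exp (-(∑ k ∈ Finset.range N, c (k+1) * E (k+1) ω)) ∂P)
      atTop (𝓝 (∫ ω, Real.exp (-(∑' k : ℕ, c (k+1) * E (k+1) ω)) ∂P)) := by
    apply tendsto_integral_of_dominated_convergence (bound := fun _ => (1:ℝ))
    · intro N
      exact ((Finset.measurable_sum _ fun k _ => (hmeas _).const_mul _).neg.exp).aestronglyMeasurable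
    · exact integrable_const 1
    · intro N
      filter_upwards [hEnn] with ω hω
      rw [Real.norm_eq_abs, abs_of_pos (Real.exp_pos _), Real.exp_le_one_iff]
      simp only [neg_nonpos]
      exact Finset.sum_nonneg fun k _ => mul_nonneg (hc_nonneg _) (hω _)
    · filter_upwards [hae_sum] with ω hω
      have h1 := (hω.hasSum.tendsto_sum_nat).neg
      have h2 := (Real.continuous_exp.tendsto _).comp h1
      simpa [Function.comp_def] using h2
  -- Step 5: Euler product limit
  have hsqrt_pos : 0 < Real.sqrt (2 * s) := Real.sqrt_pos.mpr (by linarith)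
  set t : ℝ := Real.sqrt (2 * s) / Real.pi with htdef
  have ht : 0 < t := by positivity
  have h2s : Real.sqrt (2 * s) ^ 2 = 2 * s := Real.sq_sqrt (by linarith)
  have hfactor : ∀ k : ℕ, 1 + (2*t)^2 / (2*(k:ℝ)+1)^2 = 1 + c (k+1) := by
    intro k
    congr 1
    simp only [hc, htdef]
    have e1 : ((k+1:ℕ):ℝ) - 1/2 = (2*(k:ℝ)+1)/2 := by push_cast; ring
    rw [e1]
    have h1 : (2*(k:ℝ)+1) ≠ 0 := by positivity
    rw [mul_pow, div_pow, h2s]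
    field_simp
  have hcosh := my_euler_cosh ht
  have hπt : Real.pi * t = Real.sqrt (2*s) := by
    rw [htdef]
    field_simp
  rw [hπt] at hcosh
  have hprod1 : Tendsto (fun N => ∏ k ∈ Finset.range N, (1 + c (k+1))) atTop
      (𝓝 (Real.cosh (Real.sqrt (2*s)))) :=
    hcosh.congr (fun N => Finset.prod_congr rfl fun k _ => hfactor k)
  have hcosh_ne : Real.cosh (Real.sqrt (2*s)) ≠ 0 := (Real.cosh_pos _).ne'
  have hprod : Tendsto (fun N => ∏ k ∈ Finset.range N, (1 + c (k+1))⁻¹) atTop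
      (𝓝 (1 / Real.cosh (Real.sqrt (2*s)))) := by
    have h5 := hprod1.inv₀ hcosh_ne
    simp only [one_div]
    exact h5.congr fun N => by rw [← Finset.prod_inv_distrib]
  -- Step 6: combine
  have hkey : ∫ ω, Real.exp (-(∑' k : ℕ, c (k+1) * E (k+1) ω)) ∂P
      = 1 / Real.cosh (Real.sqrt (2*s)) :=
    tendsto_nhds_unique (Filter.Tendsto.congr hmgf hDCT) hprod
  rw [← hkey]
  have hfun : ∀ ω, Real.exp (-s * ((2 / Real.pi ^ 2) *
        ∑' n : ℕ, E (n + 1) ω / ((n + 1 : ℝ) - 1/2) ^ 2))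
      = Real.exp (-(∑' k : ℕ, c (k+1) * E (k+1) ω)) := by
    intro ω
    congr 1
    have hterm : ∀ k:ℕ, (s * (2/Real.pi^2)) * (E (k+1) ω / ((k:ℝ)+1-1/2)^2)
        = c (k+1) * E (k+1) ω := by
      intro k
      simp only [hc]
      push_cast
      ring
    calc -s * ((2/Real.pi^2) * ∑' n:ℕ, E (n+1) ω / (((n:ℝ)+1) - 1/2)^2)
        = -((s * (2/Real.pi^2)) * ∑' n:ℕ, E (n+1) ω / (((n:ℝ)+1) - 1/2)^2) := by ring
      _ = -(∑' n:ℕ, (s * (2/Real.pi^2)) * (E (n+1) ω / (((n:ℝ)+1) - 1/2)^2)) := by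
          rw [tsum_mul_left]
      _ = -(∑' n:ℕ, c (n+1) * E (n+1) ω) := by
          rw [tsum_congr hterm]
  exact integral_congr_ae (Filter.Eventually.of_forall hfun)
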